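/- Let f : ℝⁿ → ℝ be locally Lipschitz, x₀ ∈ ℝⁿ, ε > 0, c ∈ (0,1), W ⊆ ∂_ε f(x₀) nonempty compact, and ṽ := -argmin{‖ξ‖² : ξ ∈ conv(W)} with ṽ ≠ 0. If f(x₀ + (ε/‖ṽ‖) ṽ) > f(x₀) - c ε ‖ṽ‖, then there exist t' ∈ (0, ε/‖ṽ‖) and ξ' ∈ ∂f(x₀ + t' ṽ) with ⟨ξ', ṽ⟩ > -c ‖ṽ‖². In particular, ξ' ∉ conv(W). -/

import Mathlib

set_option linter.unusedSectionVars false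

open Filter Set Topology RealInnerProductSpace

noncomputable def clarkeDir {E : Type*} [NormedAddCommGroup E] [InnerProductSpace ℝ E]
    (f : E → ℝ) (x v : E) : ℝ :=
  Filter.limsup (fun p : E × ℝ => (f (p.1 + p.2 • v) - f p.1) / p.2)
    ((nhds x) ×ˢ (nhdsWithin 0 (Set.Ioi 0)))

namespace ClarkeAux

variable {E : Type*} [NormedAddCommGroup E] [InnerProductSpace ℝ E]

/-- the difference quotient -/
noncomputable def quot (f : E → ℝ) (v : E) : E × ℝ → ℝ := fun p => (f (p.1 + p.2 • v) - f p.1) / p.2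

/-- the base filter -/
def Fx (x : E) : Filter (E × ℝ) := (nhds x) ×ˢ (nhdsWithin 0 (Set.Ioi 0))

instance (x : E) : (Fx x).NeBot := by
  have : (nhdsWithin (0:ℝ) (Set.Ioi 0)).NeBot := nhdsGT_neBot 0
  exact Filter.prod_neBot.2 ⟨inferInstance, this⟩

lemma clarkeDir_eq (f : E → ℝ) (x v : E) : clarkeDir f x v = limsup (quot f v) (Fx x) := rfl

lemma tendsto_snd_nhdsWithin (x : E) :
    Tendsto (fun p : E × ℝ => p.2) (Fx x) (nhdsWithin 0 (Set.Ioi 0)) := tendsto_snd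

lemma tendsto_snd_zero (x : E) :
    Tendsto (fun p : E × ℝ => p.2) (Fx x) (nhds 0) :=
  (tendsto_snd_nhdsWithin x).mono_right nhdsWithin_le_nhds

/-- eventual bound on the quotient from local Lipschitzness -/
lemma quot_bound {f : E → ℝ} (hf : LocallyLipschitz f) (x v : E) :
    ∃ M : ℝ, 0 ≤ M ∧ ∀ᶠ p in Fx x, |quot f v p| ≤ M := by
  obtain ⟨K, U, hU, hK⟩ := hf x
  obtain ⟨r, hr, hball⟩ := Metric.mem_nhds_iff.1 hU
  refine ⟨K * ‖v‖, by positivity, ?_⟩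
  set δ := r / (2 * (‖v‖ + 1)) with hδdef
  have hδ : 0 < δ := by positivity
  have h1 : Metric.ball x (r/2) ×ˢ Set.Ioo (0:ℝ) δ ∈ Fx x :=
    Filter.prod_mem_prod (Metric.ball_mem_nhds x (by positivity))
      (Ioo_mem_nhdsGT_of_mem ⟨le_refl 0, hδ⟩)
  filter_upwards [h1] with p hp
  obtain ⟨hp1, hp2⟩ := hp
  have hp2' : (0:ℝ) < p.2 := hp2.1
  have hv1 : (0:ℝ) < ‖v‖ + 1 := by positivity
  have hsm : ‖p.2 • v‖ < r/2 := by
    rw [norm_smul, Real.norm_eq_abs, abs_of_pos hp2']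
    have h3 : p.2 * ‖v‖ < δ * (‖v‖ + 1) := by
      have := hp2.2
      nlinarith [norm_nonneg v]
    have h4 : δ * (‖v‖ + 1) = r / 2 := by
      rw [hδdef, div_mul_eq_mul_div, div_eq_div_iff (by positivity) (by norm_num)]
      ring
    linarith
  have hd1 : dist p.1 x < r/2 := Metric.mem_ball.1 hp1
  have hmem1 : p.1 ∈ U := hball (Metric.mem_ball.2 (by linarith))
  have hmem2 : p.1 + p.2 • v ∈ U := by
    apply hball; rw [Metric.mem_ball]
    calc dist (p.1 + p.2 • v) x ≤ dist (p.1 + p.2 • v) p.1 + dist p.1 x := dist_triangle _ _ _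
      _ < r/2 + r/2 := by
          rw [dist_eq_norm, add_sub_cancel_left]
          exact add_lt_add hsm hd1
      _ = r := by ring
  have hdist := hK.dist_le_mul _ hmem2 _ hmem1
  rw [Real.dist_eq, dist_eq_norm, add_sub_cancel_left, norm_smul, Real.norm_eq_abs,
    abs_of_pos hp2'] at hdist
  have : |quot f v p| = |f (p.1 + p.2 • v) - f p.1| / p.2 := by
    rw [quot, abs_div, abs_of_pos hp2']
  rw [this]
  rw [div_le_iff₀ hp2']
  calc |f (p.1 + p.2 • v) - f p.1| ≤ K * (p.2 * ‖v‖) := hdist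
    _ = K * ‖v‖ * p.2 := by ring

lemma quot_bddAbove {f : E → ℝ} (hf : LocallyLipschitz f) (x v : E) :
    IsBoundedUnder (· ≤ ·) (Fx x) (quot f v) := by
  obtain ⟨M, _, hM⟩ := quot_bound hf x v
  exact ⟨M, hM.mono fun p hp => le_of_abs_le hp⟩

lemma quot_bddBelow {f : E → ℝ} (hf : LocallyLipschitz f) (x v : E) :
    IsBoundedUnder (· ≥ ·) (Fx x) (quot f v) := by
  obtain ⟨M, _, hM⟩ := quot_bound hf x v
  exact ⟨-M, hM.mono fun p hp => neg_le_of_abs_le hp⟩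

lemma quot_cobdd {f : E → ℝ} (hf : LocallyLipschitz f) (x v : E) :
    IsCoboundedUnder (· ≤ ·) (Fx x) (quot f v) :=
  (quot_bddBelow hf x v).isCoboundedUnder_le

/-- limsup of quotient along any filter mapping into `Fx x` is at most `clarkeDir`. -/
lemma limsup_comp_le {f : E → ℝ} (hf : LocallyLipschitz f) (x v : E)
    {ι : Type*} {l : Filter ι} [l.NeBot] {m : ι → E × ℝ} (hm : Tendsto m l (Fx x)) :
    limsup (fun i => quot f v (m i)) l ≤ clarkeDir f x v := by
  obtain ⟨M, _, hM⟩ := quot_bound hf x v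
  have h1 : limsup (fun i => quot f v (m i)) l = limsup (quot f v) (map m l) :=
    Filter.limsup_comp (quot f v) m l
  rw [h1, clarkeDir_eq]
  have hmap : map m l ≤ Fx x := hm
  have hcb : IsCoboundedUnder (· ≤ ·) (map m l) (quot f v) := by
    have : (map m l).NeBot := Filter.NeBot.map inferInstance m
    exact IsBoundedUnder.isCoboundedUnder_le ⟨-M, (hmap (hM.mono fun p hp => neg_le_of_abs_le hp) : _)⟩
  exact limsup_le_limsup_of_le hmap hcb (quot_bddAbove hf x v)

lemma clarkeDir_zero (f : E → ℝ) (x : E) : clarkeDir f x 0 = 0 := by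
  rw [clarkeDir_eq]
  have : quot f (0:E) = fun _ => (0:ℝ) := by
    funext p; simp [quot]
  rw [this, limsup_const]

end ClarkeAux
namespace ClarkeAux

variable {E : Type*} [NormedAddCommGroup E] [InnerProductSpace ℝ E]

lemma clarkeDir_subadd {f : E → ℝ} (hf : LocallyLipschitz f) (x v w : E) :
    clarkeDir f x (v + w) ≤ clarkeDir f x v + clarkeDir f x w := by
  set m : E × ℝ → E × ℝ := fun p => (p.1 + p.2 • w, p.2) with hm_def
  have hm : Tendsto m (Fx x) (Fx x) := by
    apply Filter.Tendsto.prodMk ?_ (tendsto_snd_nhdsWithin x)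
    have : Tendsto (fun p : E × ℝ => p.1 + p.2 • w) (Fx x) (nhds (x + (0:ℝ) • w)) :=
      tendsto_fst.add ((tendsto_snd_zero x).smul_const w)
    simpa using this
  have key : quot f (v + w) = (fun p => quot f v (m p)) + quot f w := by
    funext p
    simp only [quot, Pi.add_apply, hm_def, ← add_div]
    congr 1
    have : p.1 + p.2 • (v + w) = p.1 + p.2 • w + p.2 • v := by
      rw [smul_add]; abel
    rw [this]
    abel
  rw [clarkeDir_eq, key]
  obtain ⟨M, _, hM⟩ := quot_bound hf x v
  have hb1 : IsBoundedUnder (· ≥ ·) (Fx x) (fun p => quot f v (m p)) :=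
    ⟨-M, hm.eventually (hM.mono fun p hp => neg_le_of_abs_le hp)⟩
  have hb2 : IsBoundedUnder (· ≤ ·) (Fx x) (fun p => quot f v (m p)) :=
    ⟨M, hm.eventually (hM.mono fun p hp => le_of_abs_le hp)⟩
  have h := limsup_add_le hb1 hb2 (quot_cobdd hf x w) (quot_bddAbove hf x w)
  refine h.trans (add_le_add ?_ le_rfl)
  exact limsup_comp_le hf x v hm

lemma clarkeDir_smul_le {f : E → ℝ} (hf : LocallyLipschitz f) (x v : E) {a : ℝ} (ha : 0 < a) :
    clarkeDir f x (a • v) ≤ a * clarkeDir f x v := by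
  set m : E × ℝ → E × ℝ := fun p => (p.1, a * p.2) with hm_def
  have hm : Tendsto m (Fx x) (Fx x) := by
    apply Filter.Tendsto.prodMk tendsto_fst
    rw [tendsto_nhdsWithin_iff]
    constructor
    · have : Tendsto (fun p : E × ℝ => a * p.2) (Fx x) (nhds (a * 0)) :=
        (tendsto_snd_zero x).const_mul a
      rw [mul_zero] at this; exact this
    · have hset : (Set.univ ×ˢ Set.Ioi (0:ℝ)) ∈ Fx x :=
        Filter.prod_mem_prod Filter.univ_mem self_mem_nhdsWithin
      filter_upwards [hset] with p hp
      exact mul_pos ha hp.2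
  have key : quot f (a • v) = (fun y => a * y) ∘ quot f v ∘ m := by
    funext p
    simp only [quot, Function.comp_apply, hm_def]
    have h1 : p.2 • (a • v) = (a * p.2) • v := by rw [smul_smul, mul_comm]
    rw [h1]
    set X := f (p.1 + (a * p.2) • v) - f p.1
    rw [← div_div, ← mul_div_assoc, mul_comm a (X / a), div_mul_cancel₀ X ha.ne']
  rw [clarkeDir_eq, key]
  obtain ⟨M, hM0, hM⟩ := quot_bound hf x v
  have h1 : limsup ((fun y => a * y) ∘ quot f v ∘ m) (Fx x)
      = limsup ((fun y => a * y) ∘ quot f v) (map m (Fx x)) := by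
    have := Filter.limsup_comp ((fun y => a * y) ∘ quot f v) m (Fx x)
    rw [← this]; rfl
  rw [h1]
  have hmap : map m (Fx x) ≤ Fx x := hm
  have hob : IsBoundedUnder (· ≤ ·) (Fx x) ((fun y => a * y) ∘ quot f v) :=
    ⟨a * M, hM.mono fun p hp => by
      simp only [Function.comp_apply]
      exact mul_le_mul_of_nonneg_left (le_of_abs_le hp) ha.le⟩
  have h2 : limsup ((fun y => a * y) ∘ quot f v) (map m (Fx x))
      ≤ limsup ((fun y => a * y) ∘ quot f v) (Fx x) := by
    have : (map m (Fx x)).NeBot := Filter.NeBot.map inferInstance m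
    refine limsup_le_limsup_of_le hmap ?_ hob
    refine IsBoundedUnder.isCoboundedUnder_le ⟨a * (-M), hmap ?_⟩
    exact hM.mono fun p hp => by
      simp only [Function.comp_apply]
      exact mul_le_mul_of_nonneg_left (neg_le_of_abs_le hp) ha.le
  refine h2.trans ?_
  rw [clarkeDir_eq]
  have := (monotone_mul_left_of_nonneg ha.le).map_limsup_of_continuousAt (F := Fx x)
    (quot f v) ((continuous_const.mul continuous_id).continuousAt)
    (quot_bddAbove hf x v) (quot_cobdd hf x v)
  rw [← this]

lemma clarkeDir_smul {f : E → ℝ} (hf : LocallyLipschitz f) (x v : E) {a : ℝ} (ha : 0 < a) :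
    clarkeDir f x (a • v) = a * clarkeDir f x v := by
  refine le_antisymm (clarkeDir_smul_le hf x v ha) ?_
  have h := clarkeDir_smul_le hf x (a • v) (inv_pos.2 ha)
  rw [smul_smul, inv_mul_cancel₀ ha.ne', one_smul] at h
  calc a * clarkeDir f x v ≤ a * (a⁻¹ * clarkeDir f x (a • v)) :=
        mul_le_mul_of_nonneg_left h ha.le
    _ = clarkeDir f x (a • v) := by field_simp

lemma clarkeDir_neg_le {f : E → ℝ} (hf : LocallyLipschitz f) (x v : E) :
    -clarkeDir f x (-v) ≤ clarkeDir f x v := by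
  have h := clarkeDir_subadd hf x v (-v)
  rw [add_neg_cancel, clarkeDir_zero] at h
  linarith

end ClarkeAux
namespace ClarkeAux

variable {E : Type*} [NormedAddCommGroup E] [InnerProductSpace ℝ E]
  [CompleteSpace E] [FiniteDimensional ℝ E]

lemma exists_clarke_inner_eq {f : E → ℝ} (hf : LocallyLipschitz f) (x : E) {v : E}
    (hv : v ≠ 0) :
    ∃ ξ : E, (∀ w, ⟪ξ, w⟫ ≤ clarkeDir f x w) ∧ ⟪ξ, v⟫ = clarkeDir f x v := by
  set N : E → ℝ := clarkeDir f x with hN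
  have N_hom : ∀ c : ℝ, 0 < c → ∀ y, N (c • y) = c * N y := fun c hc y =>
    clarkeDir_smul hf x y hc
  have N_add : ∀ y z, N (y + z) ≤ N y + N z := fun y z => clarkeDir_subadd hf x y z
  have hdom : ∀ y : (LinearPMap.mkSpanSingleton (K := ℝ) (σ := RingHom.id ℝ) v (N v) hv).domain,
      (LinearPMap.mkSpanSingleton (K := ℝ) (σ := RingHom.id ℝ) v (N v) hv) y ≤ N y := by
    rintro ⟨y, hy⟩
    obtain ⟨a, rfl⟩ := Submodule.mem_span_singleton.1 hy
    have happ : (LinearPMap.mkSpanSingleton (K := ℝ) (σ := RingHom.id ℝ) v (N v) hv) ⟨a • v, hy⟩ = a • N v :=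
      LinearPMap.mkSpanSingleton'_apply v (N v) _ a _
    rw [happ]
    show a • N v ≤ N (a • v)
    rcases lt_trichotomy a 0 with hlt | heq | hgt
    · have h1 : N (a • v) = (-a) * N (-v) := by
        have : a • v = (-a) • (-v) := by simp
        rw [this, N_hom (-a) (by linarith) (-v)]
      have h2 : -N (-v) ≤ N v := by
        have := clarkeDir_neg_le hf x v
        simpa [hN] using this
      rw [h1]
      have : a * N v ≤ (-a) * N (-v) := by nlinarith
      simpa using this
    · subst heq
      simp only [zero_smul, smul_eq_mul, zero_mul]
      rw [show N (0:E) = 0 from clarkeDir_zero f x]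
    · rw [N_hom a hgt v]; simp
  obtain ⟨g, hg1, hg2⟩ := exists_extension_of_le_sublinear _ N N_hom N_add hdom
  set ξ : E := (InnerProductSpace.toDual ℝ E).symm (LinearMap.toContinuousLinearMap g) with hξ
  have hinner : ∀ w, ⟪ξ, w⟫ = g w := fun w => by
    rw [hξ, InnerProductSpace.toDual_symm_apply]
    rfl
  refine ⟨ξ, fun w => by rw [hinner]; exact hg2 w, ?_⟩
  rw [hinner]
  have hmem : v ∈ (LinearPMap.mkSpanSingleton (K := ℝ) (σ := RingHom.id ℝ) v (N v) hv).domain :=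
    Submodule.mem_span_singleton_self v
  have h5 := hg1 ⟨v, hmem⟩
  have h6 : (LinearPMap.mkSpanSingleton (K := ℝ) (σ := RingHom.id ℝ) v (N v) hv) ⟨v, hmem⟩ = N v :=
    LinearPMap.mkSpanSingleton_apply ℝ ℝ hv (N v)
  rw [h5, h6]

/-- variational inequality for the min-norm point. -/
lemma inner_le_of_min_norm {C : Set E} (hC : Convex ℝ C) {u : E} (hu : u ∈ C)
    (hmin : ∀ ξ ∈ C, ‖u‖ ≤ ‖ξ‖) {ξ : E} (hξ : ξ ∈ C) : ‖u‖ ^ 2 ≤ ⟪u, ξ⟫ := by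
  have key : ∀ t : ℝ, t ∈ Set.Ioo (0:ℝ) 1 → 0 ≤ 2 * ⟪u, ξ - u⟫ + t * ‖ξ - u‖ ^ 2 := by
    intro t ht
    have hmemC : u + t • (ξ - u) ∈ C := by
      have h := hC hu hξ (le_of_lt (by linarith [ht.2] : (0:ℝ) < 1 - t)) ht.1.le (by ring)
      convert h using 1
      module
    have h1 : ‖u‖ ≤ ‖u + t • (ξ - u)‖ := hmin _ hmemC
    have h2 : ‖u + t • (ξ - u)‖ ^ 2 = ‖u‖ ^ 2 + 2 * (t * ⟪u, ξ - u⟫) + t ^ 2 * ‖ξ - u‖ ^ 2 := by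
      rw [@norm_add_sq_real, real_inner_smul_right, norm_smul]
      rw [Real.norm_eq_abs, abs_of_pos ht.1]
      ring
    have h3 : ‖u‖ ^ 2 ≤ ‖u + t • (ξ - u)‖ ^ 2 := by
      apply pow_le_pow_left₀ (norm_nonneg _) h1
    rw [h2] at h3
    nlinarith [ht.1]
  have h0 : 0 ≤ 2 * ⟪u, ξ - u⟫ := by
    by_contra h
    push_neg at h
    set e := -(2 * ⟪u, ξ - u⟫) with he
    have he' : 0 < e := by rw [he]; linarith
    set t := min (e / (2 * (‖ξ - u‖ ^ 2 + 1))) (1/2) with ht_def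
    have htpos : 0 < t := by
      apply lt_min
      · positivity
      · norm_num
    have ht1 : t < 1 := lt_of_le_of_lt (min_le_right _ _) (by norm_num)
    have := key t ⟨htpos, ht1⟩
    have hle : t * ‖ξ - u‖ ^ 2 ≤ e / 2 := by
      have h1 : t ≤ e / (2 * (‖ξ - u‖ ^ 2 + 1)) := min_le_left _ _
      have h2 : t * ‖ξ - u‖ ^ 2 ≤ e / (2 * (‖ξ - u‖ ^ 2 + 1)) * ‖ξ - u‖ ^ 2 :=
        mul_le_mul_of_nonneg_right h1 (by positivity)
      refine h2.trans ?_
      rw [div_mul_eq_mul_div, div_le_div_iff₀ (by positivity) (by norm_num)]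
      nlinarith [sq_nonneg (‖ξ - u‖)]
    linarith
  have : ⟪u, ξ - u⟫ = ⟪u, ξ⟫ - ‖u‖ ^ 2 := by
    rw [inner_sub_right, real_inner_self_eq_norm_sq]
  linarith [h0, this ▸ h0]

end ClarkeAux
namespace ClarkeAux

variable {E : Type*} [NormedAddCommGroup E] [InnerProductSpace ℝ E]

lemma segment_bound {f : E → ℝ} (hf : LocallyLipschitz f) (x₀ v : E) {T a : ℝ} (hT : 0 < T)
    (h : ∀ t ∈ Set.Ioo (0:ℝ) T, clarkeDir f (x₀ + t • v) v ≤ a) :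
    f (x₀ + T • v) - f x₀ ≤ a * T := by
  set g : ℝ → ℝ := fun t => f (x₀ + t • v) with hg
  have hgc : Continuous g :=
    hf.continuous.comp (continuous_const.add (continuous_id.smul continuous_const))
  have step : ∀ δ ∈ Set.Ioo (0:ℝ) T, g T ≤ g δ + a * (T - δ) := by
    intro δ hδ
    have key := image_le_of_liminf_slope_right_le_deriv_boundary (f := g) (a := δ) (b := T)
      (hgc.continuousOn) (B := fun y => g δ + a * (y - δ)) (B' := fun _ => a)
      (by simp) ?_ ?_ ?_
    · have := key (right_mem_Icc.2 hδ.2.le)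
      simpa using this
    · exact (continuous_const.add (continuous_const.mul (continuous_id.sub continuous_const))).continuousOn
    · intro y hy
      have : HasDerivWithinAt (fun z => g δ + a * (z - δ)) (a * 1) (Set.Ici y) y :=
        (((hasDerivWithinAt_id y _).sub_const δ).const_mul a).const_add (g δ)
      simpa using this
    · intro y hy r hr
      have hy0 : 0 < y := lt_of_lt_of_le hδ.1 hy.1
      set m : ℝ → E × ℝ := fun z => (x₀ + y • v, z - y) with hm_def
      have hsub : Tendsto (fun z => z - y) (nhdsWithin y (Set.Ioi y)) (nhdsWithin 0 (Set.Ioi 0)) := by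
        rw [tendsto_nhdsWithin_iff]
        constructor
        · have : Tendsto (fun z : ℝ => z - y) (nhds y) (nhds (y - y)) :=
            (continuous_id.sub continuous_const).tendsto y
          rw [sub_self] at this
          exact this.mono_left nhdsWithin_le_nhds
        · filter_upwards [self_mem_nhdsWithin] with z hz
          exact sub_pos.2 (Set.mem_Ioi.1 hz)
      have hm : Tendsto m (nhdsWithin y (Set.Ioi y)) (Fx (x₀ + y • v)) :=
        Filter.Tendsto.prodMk tendsto_const_nhds hsub
      have harg : ∀ z : ℝ, x₀ + z • v = x₀ + y • v + (z - y) • v := by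
        intro z; module
      have heq : (fun z => slope g y z) = fun z => quot f v (m z) := by
        funext z
        rw [slope_def_field, hm_def]
        simp only [quot, hg]
        rw [harg z]
      have h1 : limsup (fun z => slope g y z) (nhdsWithin y (Set.Ioi y))
          ≤ clarkeDir f (x₀ + y • v) v := by
        rw [heq]
        exact limsup_comp_le hf _ v hm
      have h2 : limsup (fun z => slope g y z) (nhdsWithin y (Set.Ioi y)) ≤ a :=
        h1.trans (h y ⟨hy0, hy.2⟩)
      obtain ⟨M, _, hM⟩ := quot_bound hf (x₀ + y • v) v
      have hbdd : IsBoundedUnder (· ≤ ·) (nhdsWithin y (Set.Ioi y)) (fun z => slope g y z) := by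
        refine ⟨M, ?_⟩
        rw [heq]
        exact hm.eventually (hM.mono fun p hp => le_of_abs_le hp)
      exact (eventually_lt_of_limsup_lt (lt_of_le_of_lt h2 hr) hbdd).frequently
  have hlim : Tendsto (fun δ => g δ + a * (T - δ)) (nhdsWithin 0 (Set.Ioi 0))
      (nhds (g 0 + a * (T - 0))) := by
    have h1 : Tendsto g (nhdsWithin (0:ℝ) (Set.Ioi 0)) (nhds (g 0)) :=
      (hgc.tendsto 0).mono_left nhdsWithin_le_nhds
    have h2 : Tendsto (fun δ : ℝ => a * (T - δ)) (nhdsWithin (0:ℝ) (Set.Ioi 0))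
        (nhds (a * (T - 0))) :=
      ((continuous_const.mul (continuous_const.sub continuous_id)).tendsto 0).mono_left
        nhdsWithin_le_nhds
    exact h1.add h2
  have hev : ∀ᶠ δ in nhdsWithin (0:ℝ) (Set.Ioi 0), g T ≤ g δ + a * (T - δ) := by
    filter_upwards [Ioo_mem_nhdsGT_of_mem ⟨le_refl (0:ℝ), hT⟩] with δ hδ
    exact step δ hδ
  have hfin : g T ≤ g 0 + a * (T - 0) := ge_of_tendsto hlim hev
  have hg0 : g 0 = f x₀ := by rw [hg]; simp
  have hgT : g T = f (x₀ + T • v) := rfl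
  rw [hg0, hgT] at hfin
  linarith

end ClarkeAux
noncomputable def clarkeSubdiff {E : Type*} [NormedAddCommGroup E] [InnerProductSpace ℝ E]
    (f : E → ℝ) (x : E) : Set E :=
  {ξ | ∀ v, ⟪ξ, v⟫ ≤ clarkeDir f x v}

noncomputable def goldsteinSubdiff {E : Type*} [NormedAddCommGroup E] [InnerProductSpace ℝ E]
    (f : E → ℝ) (ε : ℝ) (x : E) : Set E :=
  convexHull ℝ (⋃ y ∈ Metric.closedBall x ε, clarkeSubdiff f y)


theorem stmt3 {n : ℕ} (f : EuclideanSpace ℝ (Fin n) → ℝ) (hf : LocallyLipschitz f)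
    (x₀ : EuclideanSpace ℝ (Fin n)) (ε c : ℝ) (hε : 0 < ε) (hc : c ∈ Set.Ioo (0:ℝ) 1)
    (W : Set (EuclideanSpace ℝ (Fin n))) (hW : W ⊆ goldsteinSubdiff f ε x₀)
    (hWne : W.Nonempty) (hWcomp : IsCompact W)
    (vtil : EuclideanSpace ℝ (Fin n))
    (hmem : -vtil ∈ convexHull ℝ W)
    (hmin : ∀ ξ ∈ convexHull ℝ W, ‖-vtil‖ ≤ ‖ξ‖)
    (hne : vtil ≠ 0)
    (hbad : f (x₀ + (ε / ‖vtil‖) • vtil) > f x₀ - c * ε * ‖vtil‖) :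
    ∃ t' ∈ Set.Ioo (0:ℝ) (ε / ‖vtil‖), ∃ ξ' ∈ clarkeSubdiff f (x₀ + t' • vtil),
      ⟪ξ', vtil⟫ > -c * ‖vtil‖^2 ∧ ξ' ∉ convexHull ℝ W := by
  have hvn : 0 < ‖vtil‖ := norm_pos_iff.2 hne
  have hT : 0 < ε / ‖vtil‖ := div_pos hε hvn
  have step1 : ∃ t' ∈ Set.Ioo (0:ℝ) (ε / ‖vtil‖),
      -c * ‖vtil‖^2 < clarkeDir f (x₀ + t' • vtil) vtil := by
    by_contra hcon
    push_neg at hcon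
    have hseg := ClarkeAux.segment_bound hf x₀ vtil hT (fun t ht => hcon t ht)
    have haT : -c * ‖vtil‖^2 * (ε / ‖vtil‖) = -(c * ε * ‖vtil‖) := by
      field_simp
    rw [haT] at hseg
    linarith [hbad]
  obtain ⟨t', ht', hdir⟩ := step1
  obtain ⟨ξ, hξ1, hξ2⟩ := ClarkeAux.exists_clarke_inner_eq hf (x₀ + t' • vtil) hne
  have hgt : ⟪ξ, vtil⟫ > -c * ‖vtil‖^2 := by rw [hξ2]; exact hdir
  refine ⟨t', ht', ξ, hξ1, hgt, ?_⟩
  intro hmem'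
  have h1 := ClarkeAux.inner_le_of_min_norm (convex_convexHull ℝ W) hmem hmin hmem'
  rw [norm_neg, inner_neg_left] at h1
  have h2 : ⟪vtil, ξ⟫ ≤ -‖vtil‖^2 := by linarith
  rw [real_inner_comm] at h2
  nlinarith [hc.1, hc.2, sq_nonneg ‖vtil‖, hvn]
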